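/- Let ≺_a and ≺_b be strict weak orders on a finite set O with ≺_a ∩ ≺_b = ∅. Then there exists a strict linear order < on O extending ≺_a such that ≺_b ⊆ <⁻¹ (i.e. x ≺_b y implies y < x). -/

import Mathlib

/-! Basic setup: trees of finite sequences, their branches, the topology on the set of
branches, the Hausdorff difference hierarchy, quasi-difference sets, and infinite
games in extensive form. -/

/-- `T` is a tree over `α`: a set of finite sequences closed under taking prefixes. -/
def IsTree {α : Type*} (T : Set (List α)) : Prop :=
  ∀ ⦃γ δ : List α⦄, γ <+: δ → δ ∈ T → γ ∈ T

/-- `succ(T, γ)`: the nodes of `T` extending `γ` and of length `|γ| + 1`. -/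
def treeSucc {α : Type*} (T : Set (List α)) (γ : List α) : Set (List α) :=
  {δ | δ ∈ T ∧ γ <+: δ ∧ δ.length = γ.length + 1}

/-- `T` is pruned if every node has a successor. -/
def IsPruned {α : Type*} (T : Set (List α)) : Prop :=
  ∀ γ ∈ T, (treeSucc T γ).Nonempty

/-- The finite prefix of length `n` of an infinite sequence `p`. -/
def playPrefix {α : Type*} (p : ℕ → α) (n : ℕ) : List α :=
  List.ofFn fun i : Fin n => p i

/-- `[T]`: the infinite sequences all of whose finite prefixes lie in `T`. -/
def Body {α : Type*} (T : Set (List α)) : Set (ℕ → α) :=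
  {p | ∀ n : ℕ, playPrefix p n ∈ T}

/-- `γ[T_γ]`: the elements of `[T]` extending the node `γ`. -/
def cylinder {α : Type*} (T : Set (List α)) (γ : List α) : Set (ℕ → α) :=
  {p | p ∈ Body T ∧ playPrefix p γ.length = γ}

/-- Open subsets of `[T]`: the unions of basic sets `γ[T_γ]`, `γ ∈ T`. -/
def IsOpenIn {α : Type*} (T : Set (List α)) (A : Set (ℕ → α)) : Prop :=
  ∃ S ⊆ T, A = ⋃ γ ∈ S, cylinder T γ

/-- Closed subsets of `[T]`: complements in `[T]` of open subsets of `[T]`. -/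
def IsClosedIn {α : Type*} (T : Set (List α)) (A : Set (ℕ → α)) : Prop :=
  A ⊆ Body T ∧ IsOpenIn T (Body T \ A)

/-- Borel subsets of `[T]`: members of the σ-algebra generated by the open
subsets of `[T]` that are themselves included in `[T]`. -/
def IsBorelIn {α : Type*} (T : Set (List α)) (X : Set (ℕ → α)) : Prop :=
  X ⊆ Body T ∧
    @MeasurableSet (ℕ → α) (MeasurableSpace.generateFrom {A | IsOpenIn T A}) X

/-- `D_θ((A_η)_{η<θ})`: the set of `x ∈ ⋃_{η<θ} A_η` such that the least `η < θ`
with `x ∈ A_η` has parity opposite to that of `θ`. -/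
noncomputable def Dset {α : Type*} (θ : Ordinal.{0}) (A : Ordinal.{0} → Set (ℕ → α)) :
    Set (ℕ → α) :=
  {x | (∃ η < θ, x ∈ A η) ∧ sInf {η | η < θ ∧ x ∈ A η} % 2 ≠ θ % 2}

/-- `D_θ([T])`: all sets of the form `D_θ((A_η)_{η<θ})` for an `⊆`-increasing family
of open subsets of `[T]`. -/
def Dclass {α : Type*} (T : Set (List α)) (θ : Ordinal.{0}) : Set (Set (ℕ → α)) :=
  {X | ∃ A : Ordinal.{0} → Set (ℕ → α),
        (∀ η < θ, IsOpenIn T (A η)) ∧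
        (∀ η₁ η₂, η₁ ≤ η₂ → η₂ < θ → A η₁ ⊆ A η₂) ∧
        X = Dset θ A}

/-- The quasi-difference sets `𝒟([T])`: open sets, unions of quasi-difference sets
placed below pairwise `⊑`-incomparable nodes, and complements in `[T]`. -/
inductive QuasiDiff {α : Type*} (T : Set (List α)) : Set (ℕ → α) → Prop
  | isOpen : ∀ A, IsOpenIn T A → QuasiDiff T A
  | iUnion : ∀ (S : Set (List α)) (D : List α → Set (ℕ → α)),
      S ⊆ T → (S.Pairwise fun γ δ => ¬ γ <+: δ) →
      (∀ γ ∈ S, QuasiDiff T (D γ)) →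
      (∀ γ ∈ S, D γ ⊆ cylinder T γ) →
      QuasiDiff T (⋃ γ ∈ S, D γ)
  | compl : ∀ A, QuasiDiff T A → QuasiDiff T (Body T \ A)

/-- An infinite game in extensive form: a tree `T` of finite plays, an owner function `d`,
an outcome function `v` on infinite plays, and a preference relation for each player. -/
structure Game (α A O : Type*) where
  T : Set (List α)
  d : List α → A
  v : (ℕ → α) → O
  pref : A → O → O → Prop

/-- The infinite sequence starting with `γ` and continuing with `p`. -/
def listExtend {α : Type*} (γ : List α) (p : ℕ → α) : ℕ → α :=
  fun n => if h : n < γ.length then γ.get ⟨n, h⟩ else p (n - γ.length)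

/-- The subgame `g_γ` of `g` at a node `γ`. -/
def Game.sub {α A O : Type*} (g : Game α A O) (γ : List α) : Game α A O where
  T := {δ | γ ++ δ ∈ g.T}
  d := fun δ => g.d (γ ++ δ)
  v := fun p => g.v (listExtend γ p)
  pref := g.pref

/-- A strategy profile on `T`: it maps each node of `T` to a successor. -/
def IsProfile {α : Type*} (T : Set (List α)) (s : List α → List α) : Prop :=
  ∀ γ ∈ T, s γ ∈ treeSucc T γ

/-- The sequence of nodes obtained from `γ` by repeatedly applying `s`. -/
def iterNode {α : Type*} (s : List α → List α) (γ : List α) : ℕ → List α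
  | 0 => γ
  | n + 1 => s (iterNode s γ n)

/-- The play `p^ε(s)` induced by `s` at the root. -/
def inducedPlay {α : Type*} [Inhabited α] (s : List α → List α) : ℕ → α :=
  fun n => (iterNode s [] (n + 1)).getD n default

/-- The subprofile `s_γ`, defined by `γ s_γ(δ) = s(γδ)`. -/
def subProfile {α : Type*} (γ : List α) (s : List α → List α) : List α → List α :=
  fun δ => (s (γ ++ δ)).drop γ.length

/-- `s` is a Nash equilibrium of `g`: no player `a` has a profitable deviation `s'`
differing from `s` only at nodes owned by `a`. -/
def IsNE {α A O : Type*} [Inhabited α] (g : Game α A O) (s : List α → List α) : Prop :=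
  ¬ ∃ (a : A) (s' : List α → List α), IsProfile g.T s' ∧
      (∀ γ ∈ g.T, s γ ≠ s' γ → g.d γ = a) ∧
      g.pref a (g.v (inducedPlay s)) (g.v (inducedPlay s'))

/-- `s` is a subgame perfect equilibrium of `g`: `s_γ` is an NE of `g_γ` for all `γ ∈ T`. -/
def IsSPE {α A O : Type*} [Inhabited α] (g : Game α A O) (s : List α → List α) : Prop :=
  ∀ γ ∈ g.T, IsNE (g.sub γ) (subProfile γ s)

/-- The outcomes occurring in `g`. -/
def OutcomesOf {α A O : Type*} (g : Game α A O) : Set O := g.v '' Body g.T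

/-- `x ∈ Os` is Pareto-optimal in `Os`. -/
def ParetoOpt {A O : Type*} (pref : A → O → O → Prop) (Os : Set O) (x : O) : Prop :=
  x ∈ Os ∧ ∀ y ∈ Os, ∀ a, pref a x y → ∃ b, pref b y x

/-- The outcome induced by the subprofile `s_γ` in the subgame `g_γ`. -/
def subOutcome {α A O : Type*} [Inhabited α] (g : Game α A O) (s : List α → List α)
    (γ : List α) : O :=
  (g.sub γ).v (inducedPlay (subProfile γ s))

/-- Global-Pareto SPE: an SPE inducing in every subgame an outcome that is
Pareto-optimal among the outcomes occurring in that subgame. -/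
def IsGPSPE {α A O : Type*} [Inhabited α] (g : Game α A O) (s : List α → List α) : Prop :=
  IsSPE g s ∧ ∀ γ ∈ g.T, ParetoOpt g.pref (OutcomesOf (g.sub γ)) (subOutcome g s γ)

/-- An `x`-pseudo-leaf: a shortest node `γ ∈ T` such that only `x` occurs in `g_γ`. -/
def IsPseudoLeaf {α A O : Type*} (g : Game α A O) (x : O) (γ : List α) : Prop :=
  γ ∈ g.T ∧ OutcomesOf (g.sub γ) = {x} ∧
    ∀ δ, δ <+: γ → δ ≠ γ → OutcomesOf (g.sub δ) ≠ {x}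

/-- A strict weak order: irreflexive, transitive, with transitive complement. -/
def IsSWO {O : Type*} (r : O → O → Prop) : Prop :=
  (∀ x, ¬ r x x) ∧ (∀ x y z, r x y → r y z → r x z) ∧
  (∀ x y z, ¬ r x y → ¬ r y z → ¬ r x z)

/-- The SPE killer does not occur in the family of preferences `lt`. -/
def NoSPEKiller {A O : Type*} (lt : A → O → O → Prop) : Prop :=
  ∀ a b : A, ∀ x y z : O, ¬ (lt a z y ∧ lt a y x ∧ lt b x z ∧ lt b z y)

/-- Rank function for a strict weak order on a finite type. -/
lemma swo_rank {O : Type*} [Finite O] (r : O → O → Prop) (h : IsSWO r) :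
    ∃ f : O → ℕ, ∀ x y, r x y ↔ f x < f y := by
  classical
  obtain ⟨hirr, htr, hntr⟩ := h
  refine ⟨fun x => Set.ncard {z | r z x}, fun x y => ?_⟩
  constructor
  · intro hxy
    apply Set.ncard_lt_ncard
    · constructor
      · intro z hz; exact htr _ _ _ hz hxy
      · intro hsub
        exact hirr x (hsub hxy)
    · exact Set.toFinite _
  · intro hlt
    by_contra hxy
    have hsub : {z | r z y} ⊆ {z | r z x} := by
      intro z hz
      by_contra hzx
      exact hntr _ _ _ hzx hxy hz
    have := Set.ncard_le_ncard hsub (Set.toFinite _)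
    exact absurd hlt (not_lt.mpr this)

/-- two disjoint strict weak orders on a finite set admit a strict linear
order extending the first and contained in the inverse of the second. -/
theorem stmt14 {O : Type*} [Finite O] (ra rb : O → O → Prop)
    (hra : IsSWO ra) (hrb : IsSWO rb)
    (hdisj : ∀ x y : O, ¬ (ra x y ∧ rb x y)) :
    ∃ lt : O → O → Prop, IsStrictTotalOrder O lt ∧
      (∀ x y, ra x y → lt x y) ∧ (∀ x y, rb x y → lt y x) := by
  classical
  obtain ⟨fa, hfa⟩ := swo_rank ra hra
  obtain ⟨fb, hfb⟩ := swo_rank rb hrb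
  have : Countable O := Finite.to_countable
  obtain ⟨e, he⟩ := exists_injective_nat O
  refine ⟨fun u v => fa u < fa v ∨ (fa u = fa v ∧ (fb v < fb u ∨ (fb u = fb v ∧ e u < e v))),
    ?_, ?_, ?_⟩
  · refine { trichotomous := ?_, irrefl := ?_, trans := ?_ }
    · intro x y
      simp only [imp_iff_not_or, not_not]
      refine Or.imp_right Or.symm ?_
      rcases lt_trichotomy (fa x) (fa y) with h | h | h
      · exact Or.inl (Or.inl h)
      · rcases lt_trichotomy (fb x) (fb y) with h2 | h2 | h2
        · exact Or.inr (Or.inr (Or.inr ⟨h.symm, Or.inl h2⟩))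
        · rcases lt_trichotomy (e x) (e y) with h3 | h3 | h3
          · exact Or.inl (Or.inr ⟨h, Or.inr ⟨h2, h3⟩⟩)
          · exact Or.inr (Or.inl (he h3))
          · exact Or.inr (Or.inr (Or.inr ⟨h.symm, Or.inr ⟨h2.symm, h3⟩⟩))
        · exact Or.inl (Or.inr ⟨h, Or.inl h2⟩)
      · exact Or.inr (Or.inr (Or.inl h))
    · intro x h
      rcases h with h | ⟨_, h | ⟨_, h⟩⟩ <;> omega
    · intro x y z hxy hyz
      rcases hxy with h | ⟨h1, h | ⟨h2, h3⟩⟩ <;>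
        rcases hyz with g | ⟨g1, g | ⟨g2, g3⟩⟩
      · exact Or.inl (lt_trans h g)
      · exact Or.inl (h.trans_eq g1)
      · exact Or.inl (h.trans_eq g1)
      · exact Or.inl (h1.trans_lt g)
      · exact Or.inr ⟨h1.trans g1, Or.inl (g.trans h)⟩
      · exact Or.inr ⟨h1.trans g1, Or.inl (g2 ▸ h)⟩
      · exact Or.inl (h1.trans_lt g)
      · exact Or.inr ⟨h1.trans g1, Or.inl (g.trans_eq h2.symm)⟩
      · exact Or.inr ⟨h1.trans g1, Or.inr ⟨h2.trans g2, h3.trans g3⟩⟩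
  · intro x y h
    exact Or.inl ((hfa x y).mp h)
  · intro x y h
    have hb : fb x < fb y := (hfb x y).mp h
    have hna : ¬ ra x y := fun ha => hdisj x y ⟨ha, h⟩
    have : ¬ fa x < fa y := fun hl => hna ((hfa x y).mpr hl)
    rcases lt_or_eq_of_le (le_of_not_gt this) with h2 | h2
    · exact Or.inl h2
    · exact Or.inr ⟨h2, Or.inl hb⟩
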